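/- Let μ be a finite positive Borel measure on the unit circle T with infinite support, K_n its Christoffel kernel, w ∈ T, ζ_{0n}, …, ζ_{nn} ∈ T the zeros of B_{n+1}(w,·), and ℓ_{jn}(z) := K_n(z, ζ_{jn}) / K_n(ζ_{jn}, ζ_{jn}) the fundamental polynomials. For any function f : T → ℂ, the Lagrange interpolant L_n(f) := Σ_{j=0}^n f(ζ_{jn}) ℓ_{jn} satisfies ∫_T |L_n(f)|² dμ = Σ_{j=0}^n |f(ζ_{jn})|² / K_n(ζ_{jn}, ζ_{jn}); in particular ∫_T |L_n(f)|² dμ ≤ μ(T) · max_{0≤j≤n} |f(ζ_{jn})|². -/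

import Mathlib

open MeasureTheory Polynomial Filter
open scoped ComplexConjugate Topology

/-- The Christoffel kernel `K_n(w,z) = ∑_{j=0}^n conj(φ_j(w)) φ_j(z)`. -/
noncomputable def christoffelK (φ : ℕ → Polynomial ℂ) (n : ℕ) (w z : ℂ) : ℂ :=
  ∑ j ∈ Finset.range (n + 1), conj ((φ j).eval w) * (φ j).eval z

/-- The para-orthogonal polynomial `B_{n+1}(w,z) = (1 − conj(w) z) K_n(w,z)`. -/
noncomputable def paraOrtho (φ : ℕ → Polynomial ℂ) (n : ℕ) (w z : ℂ) : ℂ :=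
  (1 - conj w * z) * christoffelK φ n w z

/-- The `j`-th fundamental (Lagrange) polynomial for the nodes `ζ`:
`ℓ_{jn}(z) = K_n(z, ζ_{jn}) / K_n(ζ_{jn}, ζ_{jn})`.  Note that by Hermitian symmetry of the
kernel, `K_n(z, ζ) = conj (K_n(ζ, z))`; as a *polynomial* in `z` (of degree `n`, as in the
paper) the fundamental polynomial is `z ↦ K_n(ζ_{jn}, z) / K_n(ζ_{jn}, ζ_{jn})`, with
`K_n(ζ_{jn}, ζ_{jn}) = ∑_k |φ_k(ζ_{jn})|²` a positive real number. -/
noncomputable def ellFun (φ : ℕ → Polynomial ℂ) (n : ℕ) (ζ : Fin (n + 1) → ℂ)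
    (j : Fin (n + 1)) (z : ℂ) : ℂ :=
  christoffelK φ n (ζ j) z / christoffelK φ n (ζ j) (ζ j)

/-- The `n`-th Lagrange interpolation polynomial of `f` at the nodes `ζ`:
`L_n(f)(z) = ∑_{j=0}^n f(ζ_{jn}) ℓ_{jn}(z)`. -/
noncomputable def lagrangeInterp (φ : ℕ → Polynomial ℂ) (n : ℕ) (ζ : Fin (n + 1) → ℂ)
    (f : ℂ → ℂ) (z : ℂ) : ℂ :=
  ∑ j : Fin (n + 1), f (ζ j) * ellFun φ n ζ j z

set_option linter.unusedSectionVars false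

namespace SqNormAux

/-- The kernel as a polynomial in the second variable. -/
noncomputable def kpoly (φ : ℕ → Polynomial ℂ) (n : ℕ) (u : ℂ) : Polynomial ℂ :=
  ∑ j ∈ Finset.range (n + 1), conj ((φ j).eval u) • φ j

/-- `L²(μ)` inner product of two polynomials. -/
noncomputable def pinner (μ : Measure ℂ) (p q : Polynomial ℂ) : ℂ :=
  ∫ z, p.eval z * conj (q.eval z) ∂μ

lemma kpoly_eval (φ : ℕ → Polynomial ℂ) (n : ℕ) (u z : ℂ) :
    (kpoly φ n u).eval z = christoffelK φ n u z := by
  simp [kpoly, christoffelK, eval_finset_sum, smul_eq_mul]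

section

variable {μ : Measure ℂ} [IsFiniteMeasure μ] {φ : ℕ → Polynomial ℂ}

lemma ae_circle (hμT : μ (Metric.sphere (0 : ℂ) 1)ᶜ = 0) :
    ∀ᵐ z ∂μ, ‖z‖ = 1 := by
  have h : ∀ᵐ z ∂μ, z ∈ Metric.sphere (0 : ℂ) 1 := by
    rw [ae_iff]
    exact hμT
  filter_upwards [h] with z hz
  simpa [Complex.dist_eq] using hz

lemma abs_eval_le (p : Polynomial ℂ) {z : ℂ} (hz : ‖z‖ = 1) :
    ‖p.eval z‖ ≤ ∑ i ∈ Finset.range (p.natDegree + 1), ‖p.coeff i‖ := by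
  rw [Polynomial.eval_eq_sum_range]
  refine le_trans (norm_sum_le _ _) ?_
  refine Finset.sum_le_sum fun i _ => ?_
  rw [norm_mul, norm_pow, hz, one_pow, mul_one]

lemma integrable_mul_conj (hμT : μ (Metric.sphere (0 : ℂ) 1)ᶜ = 0) (p q : Polynomial ℂ) :
    Integrable (fun z => p.eval z * conj (q.eval z)) μ := by
  have hc : Continuous fun z => p.eval z * conj (q.eval z) :=
    p.continuous.mul (Complex.continuous_conj.comp q.continuous)
  refine (integrable_const ((∑ i ∈ Finset.range (p.natDegree + 1), ‖p.coeff i‖) *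
    (∑ i ∈ Finset.range (q.natDegree + 1), ‖q.coeff i‖))).mono'
    hc.aestronglyMeasurable ?_
  filter_upwards [ae_circle hμT] with z hz
  rw [norm_mul, Complex.norm_conj]
  exact mul_le_mul (abs_eval_le p hz) (abs_eval_le q hz) (norm_nonneg _)
    (Finset.sum_nonneg fun i _ => norm_nonneg _)

lemma pinner_conj_symm (p q : Polynomial ℂ) : pinner μ q p = conj (pinner μ p q) := by
  have h : ∀ z : ℂ, q.eval z * conj (p.eval z) = conj (p.eval z * conj (q.eval z)) := by
    intro z; rw [map_mul, Complex.conj_conj]; ring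
  simp only [pinner, h, integral_conj]

lemma pinner_sub_left (hμT : μ (Metric.sphere (0 : ℂ) 1)ᶜ = 0) (p₁ p₂ q : Polynomial ℂ) :
    pinner μ (p₁ - p₂) q = pinner μ p₁ q - pinner μ p₂ q := by
  simp only [pinner, eval_sub, sub_mul]
  exact integral_sub (integrable_mul_conj hμT p₁ q) (integrable_mul_conj hμT p₂ q)

lemma pinner_sub_right (hμT : μ (Metric.sphere (0 : ℂ) 1)ᶜ = 0) (p q₁ q₂ : Polynomial ℂ) :
    pinner μ p (q₁ - q₂) = pinner μ p q₁ - pinner μ p q₂ := by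
  rw [pinner_conj_symm, pinner_sub_left hμT, map_sub, ← pinner_conj_symm, ← pinner_conj_symm]

lemma pinner_smul_left (c : ℂ) (p q : Polynomial ℂ) :
    pinner μ (c • p) q = c * pinner μ p q := by
  simp only [pinner, eval_smul, smul_eq_mul, mul_assoc]
  exact integral_const_mul c _

lemma pinner_smul_right (c : ℂ) (p q : Polynomial ℂ) :
    pinner μ p (c • q) = conj c * pinner μ p q := by
  rw [pinner_conj_symm, pinner_smul_left, map_mul, ← pinner_conj_symm]

lemma pinner_C_mul_left (c : ℂ) (p q : Polynomial ℂ) :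
    pinner μ (C c * p) q = c * pinner μ p q := by
  rw [← Polynomial.smul_eq_C_mul, pinner_smul_left]

lemma pinner_C_mul_right (c : ℂ) (p q : Polynomial ℂ) :
    pinner μ p (C c * q) = conj c * pinner μ p q := by
  rw [← Polynomial.smul_eq_C_mul, pinner_smul_right]

lemma pinner_sum_left (hμT : μ (Metric.sphere (0 : ℂ) 1)ᶜ = 0) {ι : Type*} (s : Finset ι)
    (g : ι → Polynomial ℂ) (q : Polynomial ℂ) :
    pinner μ (∑ j ∈ s, g j) q = ∑ j ∈ s, pinner μ (g j) q := by
  simp only [pinner, eval_finset_sum, Finset.sum_mul]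
  exact integral_finset_sum s fun j _ => integrable_mul_conj hμT (g j) q

lemma pinner_sum_right (hμT : μ (Metric.sphere (0 : ℂ) 1)ᶜ = 0) {ι : Type*} (s : Finset ι)
    (g : ι → Polynomial ℂ) (p : Polynomial ℂ) :
    pinner μ p (∑ j ∈ s, g j) = ∑ j ∈ s, pinner μ p (g j) := by
  rw [pinner_conj_symm, pinner_sum_left hμT, map_sum]
  exact Finset.sum_congr rfl fun j _ => (pinner_conj_symm _ _).symm

lemma pinner_X_mul (hμT : μ (Metric.sphere (0 : ℂ) 1)ᶜ = 0) (p q : Polynomial ℂ) :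
    pinner μ (X * p) (X * q) = pinner μ p q := by
  apply integral_congr_ae
  filter_upwards [ae_circle hμT] with z hz
  simp only [eval_mul, eval_X, map_mul]
  have h1 : z * conj z = 1 := by
    rw [Complex.mul_conj]
    norm_cast
    rw [← Complex.sq_norm, hz, one_pow]
  calc z * p.eval z * (conj z * conj (q.eval z))
      = (z * conj z) * (p.eval z * conj (q.eval z)) := by ring
    _ = p.eval z * conj (q.eval z) := by rw [h1, one_mul]


lemma exists_rep (hdeg : ∀ k, (φ k).degree = (k : ℕ)) :
    ∀ (m : ℕ) (p : Polynomial ℂ), p.degree < (m : ℕ) →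
      ∃ c : ℕ → ℂ, p = ∑ j ∈ Finset.range m, c j • φ j := by
  intro m
  induction m with
  | zero =>
    intro p hp
    refine ⟨0, ?_⟩
    have h0 : p = 0 := by
      by_contra hne
      rw [Polynomial.degree_eq_natDegree hne] at hp
      exact absurd hp (by exact_mod_cast Nat.not_lt_zero _)
    simp [h0]
  | succ m ih =>
    intro p hp
    have hφm : (φ m) ≠ 0 := by
      intro h
      have := hdeg m
      rw [h, Polynomial.degree_zero] at this
      exact absurd this.symm (by simp)
    have hnd : (φ m).natDegree = m := natDegree_eq_of_degree_eq_some (hdeg m)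
    have hκ0 : (φ m).coeff m ≠ 0 := by
      have := Polynomial.leadingCoeff_ne_zero.mpr hφm
      rwa [Polynomial.leadingCoeff, hnd] at this
    set a : ℂ := p.coeff m / (φ m).coeff m with ha
    set q : Polynomial ℂ := p - a • φ m with hq
    have hqd : q.degree < (m : ℕ) := by
      refine (Polynomial.degree_lt_iff_coeff_zero _ _).2 fun k hk => ?_
      have hk' : m ≤ k := by exact_mod_cast hk
      rcases eq_or_lt_of_le hk' with hkm | hkm
      · subst hkm
        simp only [hq, Polynomial.coeff_sub, Polynomial.coeff_smul, smul_eq_mul, ha]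
        rw [div_mul_cancel₀ _ hκ0, sub_self]
      · have h1 : p.coeff k = 0 := by
          apply Polynomial.coeff_eq_zero_of_degree_lt
          exact lt_of_lt_of_le hp (by exact_mod_cast hkm)
        have h2 : (φ m).coeff k = 0 := by
          apply Polynomial.coeff_eq_zero_of_degree_lt
          rw [hdeg m]; exact_mod_cast hkm
        simp [hq, h1, h2]
    obtain ⟨c, hc⟩ := ih q hqd
    refine ⟨fun j => if j = m then a else c j, ?_⟩
    rw [Finset.sum_range_succ]
    simp only [if_pos rfl]
    have hcong : ∑ j ∈ Finset.range m, (if j = m then a else c j) • φ j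
        = ∑ j ∈ Finset.range m, c j • φ j := by
      refine Finset.sum_congr rfl fun j hj => ?_
      rw [if_neg (Nat.ne_of_lt (Finset.mem_range.mp hj))]
    rw [hcong, ← hc, hq]
    abel_nf
    simp

lemma pinner_phi_phi (horth : ∀ k m, ∫ z, (φ k).eval z * conj ((φ m).eval z) ∂μ
      = if k = m then 1 else 0) (k m : ℕ) :
    pinner μ (φ k) (φ m) = if k = m then 1 else 0 := horth k m

lemma pinner_phi_right_eq_zero (hμT : μ (Metric.sphere (0 : ℂ) 1)ᶜ = 0)
    (hdeg : ∀ k, (φ k).degree = (k : ℕ))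
    (horth : ∀ k m, ∫ z, (φ k).eval z * conj ((φ m).eval z) ∂μ = if k = m then 1 else 0)
    (m : ℕ) (p : Polynomial ℂ) (hp : p.degree < (m : ℕ)) :
    pinner μ p (φ m) = 0 := by
  obtain ⟨c, rfl⟩ := exists_rep hdeg m p hp
  rw [pinner_sum_left hμT]
  refine Finset.sum_eq_zero fun j hj => ?_
  rw [pinner_smul_left, pinner_phi_phi horth,
    if_neg (Nat.ne_of_lt (Finset.mem_range.mp hj)), mul_zero]

lemma pinner_phi_left_eq_zero (hμT : μ (Metric.sphere (0 : ℂ) 1)ᶜ = 0)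
    (hdeg : ∀ k, (φ k).degree = (k : ℕ))
    (horth : ∀ k m, ∫ z, (φ k).eval z * conj ((φ m).eval z) ∂μ = if k = m then 1 else 0)
    (m : ℕ) (p : Polynomial ℂ) (hp : p.degree < (m : ℕ)) :
    pinner μ (φ m) p = 0 := by
  rw [pinner_conj_symm, pinner_phi_right_eq_zero hμT hdeg horth m p hp, map_zero]

lemma kpoly_degree (hdeg : ∀ k, (φ k).degree = (k : ℕ)) (n : ℕ) (u : ℂ) :
    (kpoly φ n u).degree ≤ (n : ℕ) := by
  refine le_trans (Polynomial.degree_sum_le _ _) ?_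
  refine Finset.sup_le fun j hj => ?_
  refine le_trans (Polynomial.degree_smul_le _ _) ?_
  rw [hdeg j]
  exact_mod_cast Nat.lt_succ_iff.mp (Finset.mem_range.mp hj)

lemma kpoly_degree_lt (hdeg : ∀ k, (φ k).degree = (k : ℕ)) (n : ℕ) (u : ℂ) :
    (kpoly φ n u).degree < ((n + 1 : ℕ) : WithBot ℕ) :=
  lt_of_le_of_lt (kpoly_degree hdeg n u) (by exact_mod_cast Nat.lt_succ_self n)

lemma pinner_kpoly_right (hμT : μ (Metric.sphere (0 : ℂ) 1)ᶜ = 0)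
    (hdeg : ∀ k, (φ k).degree = (k : ℕ))
    (horth : ∀ k m, ∫ z, (φ k).eval z * conj ((φ m).eval z) ∂μ = if k = m then 1 else 0)
    (n : ℕ) (u : ℂ) (p : Polynomial ℂ) (hp : p.degree < ((n + 1 : ℕ) : WithBot ℕ)) :
    pinner μ p (kpoly φ n u) = p.eval u := by
  obtain ⟨c, rfl⟩ := exists_rep hdeg (n + 1) p hp
  rw [kpoly, pinner_sum_right hμT]
  have h1 : ∀ j ∈ Finset.range (n + 1),
      pinner μ (∑ i ∈ Finset.range (n + 1), c i • φ i) (conj ((φ j).eval u) • φ j)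
        = c j * (φ j).eval u := by
    intro j hj
    rw [pinner_smul_right, Complex.conj_conj, pinner_sum_left hμT]
    rw [Finset.sum_eq_single j]
    · rw [pinner_smul_left, pinner_phi_phi horth, if_pos rfl, mul_one]; ring
    · intro i _ hij
      rw [pinner_smul_left, pinner_phi_phi horth, if_neg hij, mul_zero]
    · intro h; exact absurd hj h
  rw [Finset.sum_congr rfl h1]
  simp [eval_finset_sum, smul_eq_mul]

lemma pinner_kpoly_left (hμT : μ (Metric.sphere (0 : ℂ) 1)ᶜ = 0)
    (hdeg : ∀ k, (φ k).degree = (k : ℕ))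
    (horth : ∀ k m, ∫ z, (φ k).eval z * conj ((φ m).eval z) ∂μ = if k = m then 1 else 0)
    (n : ℕ) (u : ℂ) (p : Polynomial ℂ) (hp : p.degree < ((n + 1 : ℕ) : WithBot ℕ)) :
    pinner μ (kpoly φ n u) p = conj (p.eval u) := by
  rw [pinner_conj_symm, pinner_kpoly_right hμT hdeg horth n u p hp]

lemma phi0_eval_ne_zero (hdeg : ∀ k, (φ k).degree = (k : ℕ))
    (hlead : ∀ k, 0 < ((φ k).leadingCoeff).re ∧ ((φ k).leadingCoeff).im = 0) (u : ℂ) :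
    (φ 0).eval u ≠ 0 := by
  have h0 : (φ 0).degree ≤ 0 := le_of_eq (by exact_mod_cast hdeg 0)
  have hC : φ 0 = C ((φ 0).coeff 0) := Polynomial.eq_C_of_degree_le_zero h0
  have hl : (φ 0).leadingCoeff = (φ 0).coeff 0 := by
    rw [Polynomial.leadingCoeff, Polynomial.natDegree_eq_of_degree_eq_some (by exact_mod_cast hdeg 0)]
    norm_num
  intro h
  rw [hC, eval_C] at h
  have := (hlead 0).1
  rw [hl, h] at this
  simp at this


lemma pinner_self_eq_zero (hμT : μ (Metric.sphere (0 : ℂ) 1)ᶜ = 0)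
    (hμinf : ∀ s : Finset ℂ, μ ((s : Set ℂ)ᶜ) ≠ 0)
    {p : Polynomial ℂ} (h : pinner μ p p = 0) : p = 0 := by
  by_contra hp
  have hint := integrable_mul_conj hμT p p
  have hptw : ∀ z : ℂ, ‖p.eval z‖ ^ 2 = (p.eval z * conj (p.eval z)).re := by
    intro z
    rw [Complex.mul_conj, ← Complex.sq_norm]
    norm_cast
  have h2 : ∫ z, ‖p.eval z‖ ^ 2 ∂μ = 0 := by
    have h2' := integral_re hint
    simp only [RCLike.re_to_complex] at h2'
    simp only [hptw]
    rw [h2', show (∫ z, p.eval z * conj (p.eval z) ∂μ) = pinner μ p p from rfl, h, Complex.zero_re]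
  have hi : Integrable (fun z => ‖p.eval z‖ ^ 2) μ := by
    have hre := hint.re
    simp only [RCLike.re_to_complex] at hre
    simpa only [← hptw] using hre
  have h3 : (fun z => ‖p.eval z‖ ^ 2) =ᵐ[μ] 0 :=
    (integral_eq_zero_iff_of_nonneg (fun z => sq_nonneg _) hi).mp h2
  have h4 : ∀ᵐ z ∂μ, z ∈ (p.roots.toFinset : Set ℂ) := by
    filter_upwards [h3] with z hz
    have hz0 : p.eval z = 0 := by
      have habs : ‖p.eval z‖ = 0 := by
        have hz' : ‖p.eval z‖ ^ 2 = 0 := hz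
        exact pow_eq_zero_iff (two_ne_zero) |>.mp hz'
      exact norm_eq_zero.mp habs
    exact Multiset.mem_toFinset.mpr ((Polynomial.mem_roots hp).mpr hz0)
  rw [ae_iff] at h4
  exact hμinf p.roots.toFinset h4


lemma conj_mul_self_of_abs_one {u : ℂ} (hu : ‖u‖ = 1) : conj u * u = 1 := by
  rw [mul_comm, Complex.mul_conj]
  norm_cast
  rw [← Complex.sq_norm, hu, one_pow]

lemma phi_eval_ne_zero (hμT : μ (Metric.sphere (0 : ℂ) 1)ᶜ = 0)
    (hdeg : ∀ k, (φ k).degree = (k : ℕ))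
    (hlead : ∀ k, 0 < ((φ k).leadingCoeff).re ∧ ((φ k).leadingCoeff).im = 0)
    (horth : ∀ k m, ∫ z, (φ k).eval z * conj ((φ m).eval z) ∂μ = if k = m then 1 else 0)
    (m : ℕ) {u : ℂ} (hu : ‖u‖ = 1) :
    (φ m).eval u ≠ 0 := by
  match m with
  | 0 => exact phi0_eval_ne_zero hdeg hlead u
  | m + 1 =>
    intro hroot
    obtain ⟨q, hq⟩ := Polynomial.dvd_iff_isRoot.mpr hroot
    have hφne : φ (m + 1) ≠ 0 := by
      intro hz
      have := hdeg (m + 1)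
      rw [hz, Polynomial.degree_zero] at this
      exact absurd this.symm (by simp)
    have hq0 : q ≠ 0 := by
      rintro rfl
      rw [mul_zero] at hq
      exact hφne hq
    have hdq : q.degree < ((m + 1 : ℕ) : WithBot ℕ) := by
      have hmul : ((m + 1 : ℕ) : WithBot ℕ) = 1 + q.degree := by
        rw [← hdeg (m + 1), hq, Polynomial.degree_mul, Polynomial.degree_X_sub_C]
      rw [Polynomial.degree_eq_natDegree hq0] at hmul ⊢
      have : (m + 1 : ℕ) = 1 + q.natDegree := by exact_mod_cast hmul
      exact_mod_cast by omega
    set t := pinner μ q q with ht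
    have horthq : pinner μ (φ (m + 1)) q = 0 :=
      pinner_phi_left_eq_zero hμT hdeg horth (m + 1) q hdq
    have hXq : pinner μ (X * q) q = u * t := by
      have h1 : pinner μ ((X - C u) * q) q = 0 := by rw [← hq]; exact horthq
      rw [sub_mul, pinner_sub_left hμT, pinner_C_mul_left] at h1
      have := sub_eq_zero.mp h1
      rw [this]
    have ht_real : conj t = t := by
      rw [ht, ← pinner_conj_symm]
    have huu : conj u * u = 1 := conj_mul_self_of_abs_one hu
    have hone : pinner μ (φ (m + 1)) (φ (m + 1)) = 1 := by
      rw [pinner_phi_phi horth, if_pos rfl]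
    rw [hq] at hone
    have e1 : pinner μ (X * q) (X * q) = t := pinner_X_mul hμT q q
    have e3 : pinner μ q (X * q) = conj u * t := by
      rw [pinner_conj_symm, hXq, map_mul, ht_real]
    have expand : pinner μ ((X - C u) * q) ((X - C u) * q)
        = pinner μ (X * q) (X * q) - conj u * pinner μ (X * q) q
          - u * pinner μ q (X * q) + u * conj u * pinner μ q q := by
      rw [sub_mul _ _ q, pinner_sub_left hμT, pinner_sub_right hμT, pinner_sub_right hμT,
        pinner_C_mul_left, pinner_C_mul_right, pinner_C_mul_right, pinner_C_mul_left]
      ring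
    rw [expand, e1, hXq, e3, ← ht] at hone
    have : (1 : ℂ) = 0 := by
      rw [← hone]
      linear_combination (-t) * huu
    exact one_ne_zero this

lemma key_vanish (hμT : μ (Metric.sphere (0 : ℂ) 1)ᶜ = 0)
    (hμinf : ∀ s : Finset ℂ, μ ((s : Set ℂ)ᶜ) ≠ 0)
    (hdeg : ∀ k, (φ k).degree = (k : ℕ))
    (hlead : ∀ k, 0 < ((φ k).leadingCoeff).re ∧ ((φ k).leadingCoeff).im = 0)
    (horth : ∀ k m, ∫ z, (φ k).eval z * conj ((φ m).eval z) ∂μ = if k = m then 1 else 0)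
    (n : ℕ) (p : Polynomial ℂ) (hdp : p.degree < ((n + 1 : ℕ) : WithBot ℕ))
    {u : ℂ} (hu : ‖u‖ = 1) (hru : p.eval u = 0)
    (horthp : ∀ s : Polynomial ℂ, s.degree < (n : ℕ) → pinner μ p (X * s) = 0) :
    p = 0 := by
  by_cases hp0 : p = 0
  · exact hp0
  obtain ⟨q, hq⟩ := Polynomial.dvd_iff_isRoot.mpr hru
  have hq0 : q ≠ 0 := by
    rintro rfl
    rw [mul_zero] at hq
    exact hp0 hq
  have hdq : q.degree < (n : ℕ) := by
    have hmul : p.degree = 1 + q.degree := by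
      rw [hq, Polynomial.degree_mul, Polynomial.degree_X_sub_C]
    rw [hmul, Polynomial.degree_eq_natDegree hq0] at hdp
    rw [Polynomial.degree_eq_natDegree hq0]
    have h1n : (1 + q.natDegree : ℕ) < n + 1 := by exact_mod_cast hdp
    exact_mod_cast by omega
  have hndq : q.natDegree < n := by
    have := hdq
    rw [Polynomial.degree_eq_natDegree hq0] at this
    exact_mod_cast this
  have huu : conj u * u = 1 := conj_mul_self_of_abs_one hu
  have hstar : ∀ s : Polynomial ℂ, s.degree < (n : ℕ) →
      pinner μ q s = u * pinner μ q (X * s) := by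
    intro s hs
    have h0 := horthp s hs
    rw [hq, sub_mul, pinner_sub_left hμT, pinner_X_mul hμT, pinner_C_mul_left] at h0
    exact sub_eq_zero.mp h0
  set c := pinner μ q 1 with hc
  have hun : ∀ k : ℕ, k ≤ n → pinner μ q (X ^ k) = (conj u) ^ k * c := by
    intro k
    induction k with
    | zero => intro _; simp [hc]
    | succ k ih =>
      intro hk
      have hs : (X ^ k : Polynomial ℂ).degree < (n : ℕ) := by
        rw [Polynomial.degree_X_pow]
        exact_mod_cast (by omega : k < n)
      have hrel := hstar (X ^ k) hs
      rw [← pow_succ'] at hrel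
      have hb : pinner μ q (X ^ (k + 1)) = conj u * pinner μ q (X ^ k) := by
        calc pinner μ q (X ^ (k + 1)) = (conj u * u) * pinner μ q (X ^ (k + 1)) := by
              rw [huu, one_mul]
          _ = conj u * (u * pinner μ q (X ^ (k + 1))) := by ring
          _ = conj u * pinner μ q (X ^ k) := by rw [← hrel]
      rw [hb, ih (by omega), pow_succ]
      ring
  have hqphi : pinner μ q (φ n) = 0 := pinner_phi_right_eq_zero hμT hdeg horth n q hdq
  have hndphi : (φ n).natDegree = n := natDegree_eq_of_degree_eq_some (hdeg n)
  have hexp : pinner μ q (φ n) = c * conj ((φ n).eval u) := by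
    conv_lhs => rw [Polynomial.as_sum_range' (φ n) (n + 1) (by omega)]
    rw [pinner_sum_right hμT]
    have hterm : ∀ i ∈ Finset.range (n + 1),
        pinner μ q ((Polynomial.monomial i) ((φ n).coeff i))
          = conj ((φ n).coeff i * u ^ i) * c := by
      intro i hi
      rw [← Polynomial.C_mul_X_pow_eq_monomial, pinner_C_mul_right,
        hun i (Nat.lt_succ_iff.mp (Finset.mem_range.mp hi)), map_mul, map_pow]
      ring
    rw [Finset.sum_congr rfl hterm, ← Finset.sum_mul, ← map_sum]
    rw [show ∑ i ∈ Finset.range (n + 1), (φ n).coeff i * u ^ i = (φ n).eval u by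
      rw [Polynomial.eval_eq_sum_range, hndphi]]
    ring
  have hc0 : c = 0 := by
    rcases mul_eq_zero.mp (hexp ▸ hqphi) with h | h
    · exact h
    · exact absurd (star_eq_zero.mp h)
        (phi_eval_ne_zero hμT hdeg hlead horth n hu)
  have hqq : pinner μ q q = 0 := by
    have hdecomp : q = ∑ i ∈ Finset.range (q.natDegree + 1), (Polynomial.monomial i) (q.coeff i) :=
      Polynomial.as_sum_range' q _ (Nat.lt_succ_self _)
    calc pinner μ q q
        = pinner μ q (∑ i ∈ Finset.range (q.natDegree + 1),
            (Polynomial.monomial i) (q.coeff i)) := by rw [← hdecomp]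
      _ = ∑ i ∈ Finset.range (q.natDegree + 1),
            pinner μ q ((Polynomial.monomial i) (q.coeff i)) := pinner_sum_right hμT _ _ _
      _ = 0 := by
          refine Finset.sum_eq_zero fun i hi => ?_
          rw [← Polynomial.C_mul_X_pow_eq_monomial, pinner_C_mul_right,
            hun i (by have := Finset.mem_range.mp hi; omega), hc0]
          ring
  exact absurd (pinner_self_eq_zero hμT hμinf hqq) hq0


/-- The para-orthogonal polynomial as a polynomial in the second variable. -/
noncomputable def Bpoly (φ : ℕ → Polynomial ℂ) (n : ℕ) (t : ℂ) : Polynomial ℂ :=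
  kpoly φ n t - C (conj t) * (X * kpoly φ n t)

lemma Bpoly_eval (n : ℕ) (t z : ℂ) : (Bpoly φ n t).eval z = paraOrtho φ n t z := by
  simp only [Bpoly, paraOrtho, eval_sub, eval_mul, eval_C, eval_X, kpoly_eval]
  ring

lemma Bpoly_degree (hdeg : ∀ k, (φ k).degree = (k : ℕ)) (n : ℕ) (t : ℂ) :
    (Bpoly φ n t).degree ≤ ((n + 1 : ℕ) : WithBot ℕ) := by
  refine le_trans (Polynomial.degree_sub_le _ _) (max_le ?_ ?_)
  · exact le_trans (kpoly_degree hdeg n t) (by exact_mod_cast Nat.le_succ n)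
  · refine le_trans (Polynomial.degree_mul_le _ _) ?_
    refine le_trans (add_le_add Polynomial.degree_C_le
      (le_trans (Polynomial.degree_mul_le _ _)
        (add_le_add Polynomial.degree_X_le (kpoly_degree hdeg n t)))) ?_
    rw [zero_add]
    exact_mod_cast (by omega : 1 + n ≤ n + 1)

lemma kpoly_coeff_top (hdeg : ∀ k, (φ k).degree = (k : ℕ)) (n : ℕ) (t : ℂ) :
    (kpoly φ n t).coeff n = conj ((φ n).eval t) * (φ n).coeff n := by
  rw [kpoly, Polynomial.finset_sum_coeff]
  rw [Finset.sum_eq_single n]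
  · rw [Polynomial.coeff_smul, smul_eq_mul]
  · intro j hj hjn
    have hj' : j < n := by
      have := Finset.mem_range.mp hj; omega
    rw [Polynomial.coeff_smul, Polynomial.coeff_eq_zero_of_degree_lt, smul_eq_mul, mul_zero]
    rw [hdeg j]; exact_mod_cast hj'
  · intro h; exact absurd (Finset.self_mem_range_succ n) h

lemma Bpoly_coeff_top (hdeg : ∀ k, (φ k).degree = (k : ℕ)) (n : ℕ) (t : ℂ) :
    (Bpoly φ n t).coeff (n + 1) = -(conj t * (conj ((φ n).eval t) * (φ n).coeff n)) := by
  rw [Bpoly, Polynomial.coeff_sub, Polynomial.coeff_C_mul, Polynomial.coeff_X_mul,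
    kpoly_coeff_top hdeg n t]
  rw [Polynomial.coeff_eq_zero_of_degree_lt (kpoly_degree_lt hdeg n t)]
  ring

lemma Bpoly_orth (hμT : μ (Metric.sphere (0 : ℂ) 1)ᶜ = 0)
    (hdeg : ∀ k, (φ k).degree = (k : ℕ))
    (horth : ∀ k m, ∫ z, (φ k).eval z * conj ((φ m).eval z) ∂μ = if k = m then 1 else 0)
    (n : ℕ) (t : ℂ) (s : Polynomial ℂ) (hs : s.degree < (n : ℕ)) :
    pinner μ (Bpoly φ n t) (X * s) = 0 := by
  have hdXs : (X * s).degree < ((n + 1 : ℕ) : WithBot ℕ) := by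
    by_cases hs0 : s = 0
    · simp [hs0]
    · rw [Polynomial.degree_mul, Polynomial.degree_X, Polynomial.degree_eq_natDegree hs0]
      have : s.natDegree < n := by
        have := hs; rw [Polynomial.degree_eq_natDegree hs0] at this; exact_mod_cast this
      exact_mod_cast by omega
  have hds : s.degree < ((n + 1 : ℕ) : WithBot ℕ) :=
    lt_of_lt_of_le hs (by exact_mod_cast Nat.le_succ n)
  rw [Bpoly, pinner_sub_left hμT, pinner_C_mul_left, pinner_X_mul hμT,
    pinner_kpoly_left hμT hdeg horth n t (X * s) hdXs,
    pinner_kpoly_left hμT hdeg horth n t s hds,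
    eval_mul, eval_X, map_mul]
  ring

lemma kernel_orth (hμT : μ (Metric.sphere (0 : ℂ) 1)ᶜ = 0)
    (hμinf : ∀ s : Finset ℂ, μ ((s : Set ℂ)ᶜ) ≠ 0)
    (hdeg : ∀ k, (φ k).degree = (k : ℕ))
    (hlead : ∀ k, 0 < ((φ k).leadingCoeff).re ∧ ((φ k).leadingCoeff).im = 0)
    (horth : ∀ k m, ∫ z, (φ k).eval z * conj ((φ m).eval z) ∂μ = if k = m then 1 else 0)
    (n : ℕ) {w u v : ℂ} (hw : ‖w‖ = 1) (hu : ‖u‖ = 1)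
    (hv : ‖v‖ = 1) (huv : u ≠ v)
    (hBu : paraOrtho φ n w u = 0) (hBv : paraOrtho φ n w v = 0) :
    christoffelK φ n u v = 0 := by
  set Bw := Bpoly φ n w with hBw
  set Fu := Bpoly φ n u with hFu
  set a := Bw.coeff (n + 1) with ha
  set b := Fu.coeff (n + 1) with hb
  set G := a • Fu - b • Bw with hG
  have hGdeg : G.degree < ((n + 1 : ℕ) : WithBot ℕ) := by
    refine (Polynomial.degree_lt_iff_coeff_zero _ _).2 fun m hm => ?_
    have hm' : n + 1 ≤ m := by exact_mod_cast hm
    rcases eq_or_lt_of_le hm' with hmeq | hmlt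
    · rw [hG, Polynomial.coeff_sub, Polynomial.coeff_smul, Polynomial.coeff_smul, ← hmeq,
        ← ha, ← hb, smul_eq_mul, smul_eq_mul]
      ring
    · have h1 : Bw.coeff m = 0 := Polynomial.coeff_eq_zero_of_degree_lt
        (lt_of_le_of_lt (Bpoly_degree hdeg n w) (by exact_mod_cast hmlt))
      have h2 : Fu.coeff m = 0 := Polynomial.coeff_eq_zero_of_degree_lt
        (lt_of_le_of_lt (Bpoly_degree hdeg n u) (by exact_mod_cast hmlt))
      simp [hG, h1, h2]
  have hFuu : Fu.eval u = 0 := by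
    rw [hFu, Bpoly_eval, paraOrtho, conj_mul_self_of_abs_one hu, sub_self, zero_mul]
  have hBwu : Bw.eval u = 0 := by rw [hBw, Bpoly_eval]; exact hBu
  have hGu : G.eval u = 0 := by
    rw [hG, eval_sub, eval_smul, eval_smul, hFuu, hBwu, smul_zero, smul_zero, sub_zero]
  have hGorth : ∀ s : Polynomial ℂ, s.degree < (n : ℕ) → pinner μ G (X * s) = 0 := by
    intro s hs
    rw [hG, pinner_sub_left hμT, pinner_smul_left, pinner_smul_left,
      Bpoly_orth hμT hdeg horth n u s hs, Bpoly_orth hμT hdeg horth n w s hs]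
    ring
  have hG0 : G = 0 := key_vanish hμT hμinf hdeg hlead horth n G hGdeg hu hGu hGorth
  have ha0 : a ≠ 0 := by
    rw [ha, Bpoly_coeff_top hdeg n w]
    have h1 : conj w ≠ 0 := by
      intro h
      have : w = 0 := by simpa using congrArg conj h
      rw [this] at hw; simp at hw
    have h2 : conj ((φ n).eval w) ≠ 0 := by
      intro h
      exact (phi_eval_ne_zero hμT hdeg hlead horth n hw) (by simpa using congrArg conj h)
    have h3 : (φ n).coeff n ≠ 0 := by
      have hφne : φ n ≠ 0 := by
        intro hz
        have := hdeg n
        rw [hz, Polynomial.degree_zero] at this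
        exact absurd this.symm (by simp)
      have := Polynomial.leadingCoeff_ne_zero.mpr hφne
      rwa [Polynomial.leadingCoeff, natDegree_eq_of_degree_eq_some (hdeg n)] at this
    intro hzero
    apply (mul_ne_zero h1 (mul_ne_zero h2 h3))
    have := congrArg Neg.neg hzero
    simpa using this
  have heq : a • Fu = b • Bw := by
    have := sub_eq_zero.mp hG0
    exact this
  have hv' : a * Fu.eval v = b * Bw.eval v := by
    have := congrArg (Polynomial.eval v) heq
    simpa [eval_smul, smul_eq_mul] using this
  rw [show Bw.eval v = 0 from by rw [hBw, Bpoly_eval]; exact hBv, mul_zero] at hv'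
  have hFv : Fu.eval v = 0 := by
    rcases mul_eq_zero.mp hv' with h | h
    · exact absurd h ha0
    · exact h
  rw [hFu, Bpoly_eval, paraOrtho] at hFv
  rcases mul_eq_zero.mp hFv with h | h
  · exfalso
    apply huv
    have h1 : (1 : ℂ) = conj u * v := sub_eq_zero.mp h
    have h2 : v = u := by
      calc v = (u * conj u) * v := by
            rw [mul_comm u (conj u), conj_mul_self_of_abs_one hu, one_mul]
        _ = u * (conj u * v) := by ring
        _ = u := by rw [← h1, mul_one]
    exact h2.symm
  · exact h


lemma kdiag (hdeg : ∀ k, (φ k).degree = (k : ℕ))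
    (hlead : ∀ k, 0 < ((φ k).leadingCoeff).re ∧ ((φ k).leadingCoeff).im = 0)
    (n : ℕ) (u : ℂ) :
    christoffelK φ n u u = (((christoffelK φ n u u).re : ℝ) : ℂ)
      ∧ 0 < (christoffelK φ n u u).re := by
  have h : christoffelK φ n u u
      = ((∑ j ∈ Finset.range (n + 1), Complex.normSq ((φ j).eval u) : ℝ) : ℂ) := by
    rw [christoffelK]
    push_cast
    refine Finset.sum_congr rfl fun j _ => ?_
    rw [mul_comm, Complex.mul_conj]
  have hpos : 0 < ∑ j ∈ Finset.range (n + 1), Complex.normSq ((φ j).eval u) := by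
    refine Finset.sum_pos' (fun j _ => Complex.normSq_nonneg _)
      ⟨0, Finset.mem_range.mpr (Nat.succ_pos n), ?_⟩
    exact Complex.normSq_pos.mpr (phi0_eval_ne_zero hdeg hlead u)
  constructor
  · rw [h, Complex.ofReal_re]
  · rw [h, Complex.ofReal_re]; exact hpos

end

end SqNormAux

/-- For any `f : T → ℂ`, `∫_T |L_n(f)|² dμ = ∑_{j=0}^n |f(ζ_{jn})|² / K_n(ζ_{jn},ζ_{jn})`;
in particular `∫_T |L_n(f)|² dμ ≤ μ(T) · max_{0≤j≤n} |f(ζ_{jn})|²`. -/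
theorem sq_norm_lagrangeInterp
    (μ : Measure ℂ) [IsFiniteMeasure μ]
    (hμT : μ (Metric.sphere (0 : ℂ) 1)ᶜ = 0)
    (hμinf : ∀ s : Finset ℂ, μ ((s : Set ℂ)ᶜ) ≠ 0)
    (φ : ℕ → Polynomial ℂ)
    (hdeg : ∀ k, (φ k).degree = (k : ℕ))
    (hlead : ∀ k, 0 < ((φ k).leadingCoeff).re ∧ ((φ k).leadingCoeff).im = 0)
    (horth : ∀ k m, ∫ z, (φ k).eval z * conj ((φ m).eval z) ∂μ
        = if k = m then 1 else 0)
    (n : ℕ) (w : ℂ) (hw : w ∈ Metric.sphere (0 : ℂ) 1)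
    (ζ : Fin (n + 1) → ℂ)
    (hζT : ∀ j, ζ j ∈ Metric.sphere (0 : ℂ) 1)
    (hζinj : Function.Injective ζ)
    (hζ0 : ∀ j, paraOrtho φ n w (ζ j) = 0)
    (f : ℂ → ℂ) :
    (∫ z, ‖lagrangeInterp φ n ζ f z‖ ^ 2 ∂μ
      = ∑ j : Fin (n + 1), ‖f (ζ j)‖ ^ 2 / (christoffelK φ n (ζ j) (ζ j)).re) ∧
    (∫ z, ‖lagrangeInterp φ n ζ f z‖ ^ 2 ∂μ
      ≤ (μ Set.univ).toReal *
        Finset.univ.sup' Finset.univ_nonempty (fun j => ‖f (ζ j)‖ ^ 2)) := by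
  classical
  have hw1 : ‖w‖ = 1 := by
    have h := hw; rwa [Metric.mem_sphere, Complex.dist_eq, sub_zero] at h
  have hζ1 : ∀ j, ‖ζ j‖ = 1 := fun j => by
    have h := hζT j; rwa [Metric.mem_sphere, Complex.dist_eq, sub_zero] at h
  set d : Fin (n + 1) → ℝ := fun j => (christoffelK φ n (ζ j) (ζ j)).re with hd
  have hdiag : ∀ j, christoffelK φ n (ζ j) (ζ j) = ((d j : ℝ) : ℂ) :=
    fun j => (SqNormAux.kdiag hdeg hlead n (ζ j)).1
  have hdpos : ∀ j, 0 < d j := fun j => (SqNormAux.kdiag hdeg hlead n (ζ j)).2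
  have hdC : ∀ j, ((d j : ℝ) : ℂ) ≠ 0 := fun j => by
    exact_mod_cast ne_of_gt (hdpos j)
  have hK : ∀ j k : Fin (n + 1),
      (SqNormAux.kpoly φ n (ζ j)).eval (ζ k) = if j = k then ((d j : ℝ) : ℂ) else 0 := by
    intro j k
    by_cases hjk : j = k
    · subst hjk; rw [SqNormAux.kpoly_eval, if_pos rfl]; exact hdiag j
    · rw [SqNormAux.kpoly_eval, if_neg hjk]
      exact SqNormAux.kernel_orth hμT hμinf hdeg hlead horth n hw1 (hζ1 j) (hζ1 k)
        (fun h => hjk (hζinj h)) (hζ0 j) (hζ0 k)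
  set Pg : (Fin (n + 1) → ℂ) → Polynomial ℂ :=
    fun g => ∑ j, (g j / ((d j : ℝ) : ℂ)) • SqNormAux.kpoly φ n (ζ j) with hPg
  have hPgeval : ∀ g (k : Fin (n + 1)), (Pg g).eval (ζ k) = g k := by
    intro g k
    rw [hPg, eval_finset_sum]
    rw [Finset.sum_congr rfl (fun j _ => by rw [eval_smul, smul_eq_mul, hK j k])]
    rw [Finset.sum_eq_single k]
    · rw [if_pos rfl, div_mul_cancel₀ _ (hdC k)]
    · intro j _ hjk; rw [if_neg hjk, mul_zero]
    · intro h; exact absurd (Finset.mem_univ k) h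
  have hLrep : ∀ g : ℂ → ℂ, ∀ z, lagrangeInterp φ n ζ g z = (Pg (fun j => g (ζ j))).eval z := by
    intro g z
    rw [lagrangeInterp, hPg, eval_finset_sum]
    refine Finset.sum_congr rfl fun j _ => ?_
    rw [eval_smul, smul_eq_mul, SqNormAux.kpoly_eval, ellFun, hdiag j]
    ring
  have hPP : ∀ g : Fin (n + 1) → ℂ, SqNormAux.pinner μ (Pg g) (Pg g)
      = ((∑ j, Complex.normSq (g j) / d j : ℝ) : ℂ) := by
    intro g
    rw [hPg, SqNormAux.pinner_sum_left hμT]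
    have hrow : ∀ j : Fin (n + 1),
        SqNormAux.pinner μ ((g j / ((d j : ℝ) : ℂ)) • SqNormAux.kpoly φ n (ζ j))
          (∑ k, (g k / ((d k : ℝ) : ℂ)) • SqNormAux.kpoly φ n (ζ k))
        = ((Complex.normSq (g j) / d j : ℝ) : ℂ) := by
      intro j
      rw [SqNormAux.pinner_smul_left, SqNormAux.pinner_sum_right hμT]
      have hcell : ∀ k : Fin (n + 1),
          SqNormAux.pinner μ (SqNormAux.kpoly φ n (ζ j))
            ((g k / ((d k : ℝ) : ℂ)) • SqNormAux.kpoly φ n (ζ k))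
          = conj (g k / ((d k : ℝ) : ℂ)) * (if j = k then ((d j : ℝ) : ℂ) else 0) := by
        intro k
        rw [SqNormAux.pinner_smul_right,
          SqNormAux.pinner_kpoly_right hμT hdeg horth n (ζ k) _
            (SqNormAux.kpoly_degree_lt hdeg n (ζ j)), hK j k]
      rw [Finset.sum_congr rfl (fun k _ => hcell k)]
      rw [Finset.sum_eq_single j]
      · rw [if_pos rfl]
        calc (g j / ((d j : ℝ) : ℂ)) * (conj (g j / ((d j : ℝ) : ℂ)) * ((d j : ℝ) : ℂ))
            = (g j * conj (g j)) / ((d j : ℝ) : ℂ) := by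
              rw [map_div₀, Complex.conj_ofReal]
              field_simp [hdC j]
          _ = ((Complex.normSq (g j) : ℝ) : ℂ) / ((d j : ℝ) : ℂ) := by rw [Complex.mul_conj]
          _ = ((Complex.normSq (g j) / d j : ℝ) : ℂ) := by push_cast; ring
      · intro k _ hkj; rw [if_neg (fun h => hkj h.symm), mul_zero]
      · intro h; exact absurd (Finset.mem_univ j) h
    rw [Finset.sum_congr rfl (fun j _ => hrow j)]
    push_cast
    rfl
  have hint : ∀ Q : Polynomial ℂ,
      ∫ z, ‖Q.eval z‖ ^ 2 ∂μ = (SqNormAux.pinner μ Q Q).re := by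
    intro Q
    have h2' := integral_re (SqNormAux.integrable_mul_conj hμT Q Q)
    simp only [RCLike.re_to_complex] at h2'
    have hfun : (fun z => ‖Q.eval z‖ ^ 2)
        = fun z => (Q.eval z * conj (Q.eval z)).re := by
      funext z
      rw [Complex.mul_conj, ← Complex.sq_norm]
      norm_cast
    rw [hfun, h2']
    rfl
  have hpart1 : ∫ z, ‖lagrangeInterp φ n ζ f z‖ ^ 2 ∂μ
      = ∑ j, ‖f (ζ j)‖ ^ 2 / d j := by
    have hfun : (fun z => ‖lagrangeInterp φ n ζ f z‖ ^ 2)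
        = fun z => ‖(Pg (fun j => f (ζ j))).eval z‖ ^ 2 := by
      funext z; rw [hLrep]
    rw [hfun, hint, hPP, Complex.ofReal_re]
    refine Finset.sum_congr rfl fun j _ => ?_
    rw [Complex.sq_norm]
  -- the polynomial interpolating 1 is 1
  have hP1 : Pg (fun _ => 1) = 1 := by
    have hdegsub : (Pg (fun _ => 1) - 1).natDegree < Fintype.card (Fin (n + 1)) := by
      rw [Fintype.card_fin]
      have hdegP : (Pg (fun _ => 1)).degree ≤ (n : ℕ) := by
        refine le_trans (Polynomial.degree_sum_le _ _) (Finset.sup_le fun j _ => ?_)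
        exact le_trans (Polynomial.degree_smul_le _ _) (SqNormAux.kpoly_degree hdeg n (ζ j))
      have : (Pg (fun _ => 1) - 1).degree ≤ (n : ℕ) := by
        refine le_trans (Polynomial.degree_sub_le _ _) (max_le hdegP ?_)
        exact le_trans Polynomial.degree_one_le (by exact_mod_cast Nat.zero_le n)
      have := Polynomial.natDegree_le_iff_degree_le.mpr this
      omega
    have hzero : Pg (fun _ => 1) - 1 = 0 := by
      refine Polynomial.eq_zero_of_natDegree_lt_card_of_eval_eq_zero _ hζinj
        (fun k => ?_) hdegsub
      rw [eval_sub, eval_one, hPgeval (fun _ => 1) k, sub_self]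
    have := sub_eq_zero.mp hzero
    exact this
  have hsum1 : ∑ j, 1 / d j = (μ Set.univ).toReal := by
    have h1 := hPP (fun _ => 1)
    rw [hP1] at h1
    have h2 : SqNormAux.pinner μ (1 : Polynomial ℂ) 1 = (((μ Set.univ).toReal : ℝ) : ℂ) := by
      rw [SqNormAux.pinner]
      simp only [Polynomial.eval_one, map_one, mul_one]
      rw [integral_const]
      simp [Measure.real]
    rw [h2] at h1
    have h3 := congrArg Complex.re h1
    rw [Complex.ofReal_re, Complex.ofReal_re] at h3
    have hcongr : ∀ j : Fin (n + 1), (1 : ℝ) / d j = Complex.normSq 1 / d j := by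
      intro j; rw [Complex.normSq_one]
    rw [Finset.sum_congr rfl fun j _ => hcongr j]
    exact h3.symm
  constructor
  · rw [hpart1]
  · rw [hpart1]
    set M := Finset.univ.sup' Finset.univ_nonempty
      (fun j : Fin (n + 1) => ‖f (ζ j)‖ ^ 2) with hM
    have hMn : ∀ j, ‖f (ζ j)‖ ^ 2 ≤ M := fun j =>
      Finset.le_sup' (fun j : Fin (n + 1) => ‖f (ζ j)‖ ^ 2) (Finset.mem_univ j)
    calc ∑ j, ‖f (ζ j)‖ ^ 2 / d j
        ≤ ∑ j, M * (1 / d j) := by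
          refine Finset.sum_le_sum fun j _ => ?_
          rw [div_eq_mul_one_div]
          exact mul_le_mul_of_nonneg_right (hMn j)
            (le_of_lt (one_div_pos.mpr (hdpos j)))
      _ = M * ∑ j, 1 / d j := by rw [Finset.mul_sum]
      _ = (μ Set.univ).toReal * M := by rw [hsum1]; ring
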